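/- Squared L^2(ρ∞)-norm computation for the test function: let φ_0, φ_1, …, φ_d ∈ L^2(I×μ_U) with weak derivatives in L^2, write φ = (φ_1,…,φ_d), and set G(t,x,v) = -∂_t φ_0 + v·∇_x φ_0 + v·∂_t φ - Σ_i v_i (v·∂_{x_i}φ) + φ·∇_x U. Then ∫ G^2 dt dρ∞ = ∫ [ (∂_t φ_0 - φ·∇U)^2 + |∇_x φ_0 + ∂_t φ|^2 + 2(∂_t φ_0 - φ·∇U)(∇_x·φ) + 3Σ_i(∂_{x_i}φ_i)^2 + Σ_{i≠j}(∂_{x_i}φ_j)^2 + Σ_{i≠j}∂_{x_i}φ_i ∂_{x_j}φ_j + Σ_{i≠j}∂_{x_i}φ_j ∂_{x_j}φ_i ] dt dμ_U, and consequently ∫ G^2 dt dρ∞ ≤ ∫ (∂_t φ_0 - φ·∇U + ∇_x·φ)^2 dt dμ_U + 2 Σ_{(i,j)≠(0,0)} ‖∂_{x_i}φ_j‖^2_{L^2(I×μ_U)} (with ∂_{x_0} = ∂_t). -/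

import Mathlib

open MeasureTheory Real
open scoped RealInnerProductSpace BigOperators

noncomputable section

/-- Time derivative `∂_t` of a function on `ℝ × ℝ^d`. -/
def Dt {d : ℕ} (g : ℝ × EuclideanSpace ℝ (Fin d) → ℝ)
    (p : ℝ × EuclideanSpace ℝ (Fin d)) : ℝ :=
  fderiv ℝ g p (1, 0)

/-- Spatial partial derivative `∂_{x_i}` of a function on `ℝ × ℝ^d`. -/
def Dx {d : ℕ} (i : Fin d) (g : ℝ × EuclideanSpace ℝ (Fin d) → ℝ)
    (p : ℝ × EuclideanSpace ℝ (Fin d)) : ℝ :=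
  fderiv ℝ g p (0, EuclideanSpace.single i (1 : ℝ))

/-- The test function
`G(t,x,v) = -∂_tφ₀ + v·∇_xφ₀ + v·∂_tφ - Σᵢ vᵢ (v·∂_{xᵢ}φ) + φ·∇_x U`. -/
def testG {d : ℕ} (U : EuclideanSpace ℝ (Fin d) → ℝ)
    (φ₀ : ℝ × EuclideanSpace ℝ (Fin d) → ℝ)
    (φ : Fin d → ℝ × EuclideanSpace ℝ (Fin d) → ℝ)
    (q : (ℝ × EuclideanSpace ℝ (Fin d)) × EuclideanSpace ℝ (Fin d)) : ℝ :=
  -(Dt φ₀ q.1) + (∑ i, q.2 i * Dx i φ₀ q.1) + (∑ i, q.2 i * Dt (φ i) q.1) -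
    (∑ i, q.2 i * ∑ j, q.2 j * Dx i (φ j) q.1) +
    ∑ i, φ i q.1 * gradient U q.1.2 i


open Set


open MeasureTheory Real Set

noncomputable def gpdf (t : ℝ) : ℝ := (Real.sqrt (2 * π))⁻¹ * Real.exp (-t^2/2)

lemma gpdf_nonneg (t : ℝ) : 0 ≤ gpdf t := by
  unfold gpdf; positivity

lemma continuous_gpdf : Continuous gpdf := by
  unfold gpdf
  fun_prop

lemma integrable_pow_exp (n : ℕ) : Integrable (fun t : ℝ => t ^ n * Real.exp (-t^2/2)) := by
  have hmeas : AEStronglyMeasurable (fun t : ℝ => t ^ n * Real.exp (-t^2/2)) volume :=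
    (Continuous.mul (continuous_pow n) (Real.continuous_exp.comp (by continuity))).aestronglyMeasurable
  have h1 : IntegrableOn (fun u : ℝ => u ^ n * Real.exp (-(2⁻¹ : ℝ) * u ^ 2)) (Ioi 0) := by
    have := integrableOn_rpow_mul_exp_neg_mul_sq (b := (2⁻¹ : ℝ)) (by norm_num) (s := (n : ℝ))
      (lt_of_lt_of_le neg_one_lt_zero (Nat.cast_nonneg n))
    refine this.congr_fun (fun u hu => ?_) measurableSet_Ioi
    simp only [Real.rpow_natCast]
  have h2 : Integrable (fun x : ℝ => |x| ^ n * Real.exp (-(2⁻¹:ℝ) * |x| ^ 2)) := by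
    have hint : Integrable (fun x : ℝ => ((fun u : ℝ => u ^ n * Real.exp (-(2⁻¹ : ℝ) * u ^ 2)) |x|)) := by
      -- mimic integral_comp_abs integrability argument
      have int_Iic : IntegrableOn (fun x : ℝ => ((fun u : ℝ => u ^ n * Real.exp (-(2⁻¹:ℝ) * u ^ 2)) |x|)) (Iic 0) := by
        rw [← Measure.map_neg_eq_self (volume : Measure ℝ)]
        have m : MeasurableEmbedding fun x : ℝ => -x := (Homeomorph.neg ℝ).measurableEmbedding
        rw [m.integrableOn_map_iff]
        simp only [Function.comp_def, abs_neg, neg_preimage, neg_Iic, neg_zero]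
        exact ((integrableOn_Ici_iff_integrableOn_Ioi).mpr h1).congr_fun
          (fun x hx => by simp [abs_of_nonneg (show (0:ℝ) ≤ x from hx)]) measurableSet_Ici
      have int_Ioi : IntegrableOn (fun x : ℝ => ((fun u : ℝ => u ^ n * Real.exp (-(2⁻¹:ℝ) * u ^ 2)) |x|)) (Ioi 0) := by
        exact h1.congr_fun (fun x hx => by simp [abs_of_nonneg (le_of_lt (show (0:ℝ) < x from hx))]) measurableSet_Ioi
      have := int_Iic.union int_Ioi
      rwa [Iic_union_Ioi, integrableOn_univ] at this
    exact hint
  refine h2.mono' hmeas (Filter.Eventually.of_forall fun x => ?_)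
  rw [Real.norm_eq_abs, abs_mul, abs_pow]
  rw [abs_of_nonneg (Real.exp_nonneg _)]
  apply mul_le_mul_of_nonneg_left _ (by positivity)
  rw [sq_abs]
  apply le_of_eq
  congr 1
  ring

lemma integrable_pow_gpdf (n : ℕ) : Integrable (fun t : ℝ => t ^ n * gpdf t) := by
  unfold gpdf
  have := (integrable_pow_exp n).const_mul ((Real.sqrt (2 * π))⁻¹)
  refine this.congr (Filter.Eventually.of_forall fun x => by ring)

noncomputable def gmom (n : ℕ) : ℝ := ∫ t : ℝ, t ^ n * gpdf t

lemma sqrt_two_pi_pos : 0 < Real.sqrt (2 * π) := Real.sqrt_pos.mpr (by positivity)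

lemma integral_pow_exp_odd (n : ℕ) (hn : Odd n) : (∫ t : ℝ, t ^ n * Real.exp (-t^2/2)) = 0 := by
  have h := integral_neg_eq_self (fun t : ℝ => t ^ n * Real.exp (-t^2/2)) volume
  have h2 : (∫ t : ℝ, (-t) ^ n * Real.exp (-(-t)^2/2)) = ∫ t : ℝ, -(t ^ n * Real.exp (-t^2/2)) := by
    congr 1; funext t
    rw [hn.neg_pow]; ring_nf
  rw [h2, integral_neg] at h
  linarith

lemma integral_pow_exp_even (n : ℕ) (hn : Even n) :
    (∫ t : ℝ, t ^ n * Real.exp (-t^2/2)) = (2:ℝ) ^ (((n:ℝ) + 1) / 2) * Real.Gamma (((n:ℝ) + 1) / 2) := by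
  have habs : (fun t : ℝ => t ^ n * Real.exp (-t^2/2))
      = fun t : ℝ => (fun u : ℝ => u ^ n * Real.exp (-u^2/2)) |t| := by
    funext t
    simp only [hn.pow_abs, sq_abs]
  rw [habs, integral_comp_abs (f := fun u : ℝ => u ^ n * Real.exp (-u^2/2))]
  have hcong : (∫ u in Ioi (0:ℝ), u ^ n * Real.exp (-u^2/2))
      = ∫ u in Ioi (0:ℝ), u ^ ((n:ℝ)) * Real.exp (-(2⁻¹:ℝ) * u ^ ((2:ℝ))) := by
    refine setIntegral_congr_fun measurableSet_Ioi (fun u hu => ?_)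
    rw [Real.rpow_natCast, Real.rpow_two]
    congr 1
    ring
  rw [hcong, integral_rpow_mul_exp_neg_mul_rpow (by norm_num) (lt_of_lt_of_le neg_one_lt_zero (Nat.cast_nonneg n)) (by norm_num)]
  have hinv : (2⁻¹:ℝ) ^ (-((n:ℝ) + 1) / 2) = (2:ℝ) ^ (((n:ℝ) + 1) / 2) := by
    rw [show -((n:ℝ) + 1) / 2 = -(((n:ℝ)+1)/2) by ring]
    rw [Real.inv_rpow (by norm_num), Real.rpow_neg (by norm_num), inv_inv]
  rw [hinv]
  ring

lemma sqrt_pi_pos : 0 < Real.sqrt π := Real.sqrt_pos.mpr Real.pi_pos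

lemma gmom_odd (n : ℕ) (hn : Odd n) : gmom n = 0 := by
  unfold gmom gpdf
  have : (fun t : ℝ => t ^ n * ((Real.sqrt (2 * π))⁻¹ * Real.exp (-t^2/2)))
      = fun t : ℝ => (Real.sqrt (2 * π))⁻¹ * (t ^ n * Real.exp (-t^2/2)) := by
    funext t; ring
  rw [this, integral_const_mul, integral_pow_exp_odd n hn, mul_zero]

lemma gmom_even_eq (n : ℕ) (hn : Even n) :
    gmom n = (Real.sqrt (2*π))⁻¹ * ((2:ℝ) ^ (((n:ℝ) + 1) / 2) * Real.Gamma (((n:ℝ) + 1) / 2)) := by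
  unfold gmom gpdf
  have : (fun t : ℝ => t ^ n * ((Real.sqrt (2 * π))⁻¹ * Real.exp (-t^2/2)))
      = fun t : ℝ => (Real.sqrt (2 * π))⁻¹ * (t ^ n * Real.exp (-t^2/2)) := by
    funext t; ring
  rw [this, integral_const_mul, integral_pow_exp_even n hn]

lemma two_rpow_half : (2:ℝ) ^ ((1:ℝ)/2) = Real.sqrt 2 := by
  rw [Real.sqrt_eq_rpow]

lemma sqrt_two_pi_eq : Real.sqrt (2*π) = Real.sqrt 2 * Real.sqrt π := Real.sqrt_mul (by norm_num) _

lemma gmom_zero : gmom 0 = 1 := by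
  rw [gmom_even_eq 0 (Even.zero)]
  norm_num
  field_simp
  rw [two_rpow_half, Real.Gamma_one_half_eq]
  ring

lemma gmom_two : gmom 2 = 1 := by
  rw [gmom_even_eq 2 (by decide)]
  have h1 : (((2:ℕ):ℝ) + 1) / 2 = (1:ℝ)/2 + 1 := by norm_num
  rw [h1, Real.Gamma_add_one (by norm_num), Real.Gamma_one_half_eq]
  have h2 : (2:ℝ) ^ ((1:ℝ)/2 + 1) = 2 * Real.sqrt 2 := by
    rw [Real.rpow_add (by norm_num), Real.rpow_one, two_rpow_half]; ring
  rw [h2, sqrt_two_pi_eq]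
  have := sqrt_pi_pos
  have h2' : (0:ℝ) < Real.sqrt 2 := Real.sqrt_pos.mpr (by norm_num)
  field_simp

lemma gmom_four : gmom 4 = 3 := by
  rw [gmom_even_eq 4 (by decide)]
  have h1 : (((4:ℕ):ℝ) + 1) / 2 = ((1:ℝ)/2 + 1) + 1 := by norm_num
  rw [h1, Real.Gamma_add_one (by norm_num), Real.Gamma_add_one (by norm_num), Real.Gamma_one_half_eq]
  have h2 : (2:ℝ) ^ (((1:ℝ)/2 + 1) + 1) = 4 * Real.sqrt 2 := by
    rw [Real.rpow_add (by norm_num), Real.rpow_add (by norm_num), Real.rpow_one, two_rpow_half]; ring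
  rw [h2, sqrt_two_pi_eq]
  have := sqrt_pi_pos
  have h2' : (0:ℝ) < Real.sqrt 2 := Real.sqrt_pos.mpr (by norm_num)
  field_simp
  ring

lemma gmom_one : gmom 1 = 0 := gmom_odd 1 odd_one
lemma gmom_three : gmom 3 = 0 := gmom_odd 3 (by decide)


section Multi
variable {d : ℕ}

def eind (i t : Fin d) : ℕ := if t = i then 1 else 0

lemma prod_pow_eind (x : Fin d → ℝ) (i : Fin d) : (∏ t, x t ^ eind i t) = x i := by
  unfold eind
  have h : ∀ t : Fin d, x t ^ (if t = i then 1 else 0) = if t = i then x t else 1 := fun t => by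
    split_ifs <;> simp
  rw [Finset.prod_congr rfl (fun t _ => h t), Finset.prod_ite_eq']
  simp

lemma prod_pow_add (x : Fin d → ℝ) (m m' : Fin d → ℕ) :
    (∏ t, x t ^ (m t + m' t)) = (∏ t, x t ^ m t) * (∏ t, x t ^ m' t) := by
  simp [pow_add, Finset.prod_mul_distrib]

lemma rep2 (x : Fin d → ℝ) (i j : Fin d) :
    x i * x j = ∏ t, x t ^ (eind i t + eind j t) := by
  rw [prod_pow_add, prod_pow_eind, prod_pow_eind]

lemma rep3 (x : Fin d → ℝ) (i j k : Fin d) :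
    x i * x j * x k = ∏ t, x t ^ (eind i t + eind j t + eind k t) := by
  rw [prod_pow_add x (fun t => eind i t + eind j t) (eind k), ← rep2, prod_pow_eind]

lemma rep4 (x : Fin d → ℝ) (i j k l : Fin d) :
    x i * x j * x k * x l = ∏ t, x t ^ (eind i t + eind j t + eind k t + eind l t) := by
  rw [prod_pow_add x (fun t => eind i t + eind j t + eind k t) (eind l), ← rep3, prod_pow_eind]

lemma intW_mono (m : Fin d → ℕ) :
    Integrable (fun x : Fin d → ℝ => (∏ t, x t ^ m t) * ∏ t, gpdf (x t)) := by
  have h : (fun x : Fin d → ℝ => (∏ t, x t ^ m t) * ∏ t, gpdf (x t))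
      = fun x => ∏ t, (x t ^ m t * gpdf (x t)) := by
    funext x; rw [Finset.prod_mul_distrib]
  rw [h]
  exact MeasureTheory.Integrable.fintype_prod (fun i => integrable_pow_gpdf (m i))

lemma intWval_mono (m : Fin d → ℕ) :
    (∫ x : Fin d → ℝ, (∏ t, x t ^ m t) * ∏ t, gpdf (x t)) = ∏ t, gmom (m t) := by
  have h : (fun x : Fin d → ℝ => (∏ t, x t ^ m t) * ∏ t, gpdf (x t))
      = fun x => ∏ t, (x t ^ m t * gpdf (x t)) := by
    funext x; rw [Finset.prod_mul_distrib]
  rw [h, MeasureTheory.integral_fintype_prod_volume_eq_prod (fun i t => t ^ m i * gpdf t)]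
  exact Finset.prod_congr rfl (fun t _ => rfl)

lemma iW : Integrable (fun x : Fin d → ℝ => ∏ t, gpdf (x t)) := by
  have := intW_mono (d := d) (fun _ => 0)
  simpa using this

lemma vW : (∫ x : Fin d → ℝ, ∏ t, gpdf (x t)) = 1 := by
  have := intWval_mono (d := d) (fun _ => 0)
  simpa [gmom_zero] using this

lemma iM1 (i : Fin d) : Integrable (fun x : Fin d → ℝ => x i * ∏ t, gpdf (x t)) := by
  have h : (fun x : Fin d → ℝ => x i * ∏ t, gpdf (x t))
      = fun x => (∏ t, x t ^ eind i t) * ∏ t, gpdf (x t) := by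
    funext x; rw [prod_pow_eind]
  rw [h]; exact intW_mono _

lemma vM1 (i : Fin d) : (∫ x : Fin d → ℝ, x i * ∏ t, gpdf (x t)) = 0 := by
  have h : (fun x : Fin d → ℝ => x i * ∏ t, gpdf (x t))
      = fun x => (∏ t, x t ^ eind i t) * ∏ t, gpdf (x t) := by
    funext x; rw [prod_pow_eind]
  rw [h, intWval_mono]
  exact Finset.prod_eq_zero (Finset.mem_univ i) (by simp [eind, gmom_one])

lemma iM2 (i j : Fin d) : Integrable (fun x : Fin d → ℝ => x i * x j * ∏ t, gpdf (x t)) := by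
  have h : (fun x : Fin d → ℝ => x i * x j * ∏ t, gpdf (x t))
      = fun x => (∏ t, x t ^ (eind i t + eind j t)) * ∏ t, gpdf (x t) := by
    funext x; rw [← rep2]
  rw [h]; exact intW_mono _

lemma vM2 (i j : Fin d) : (∫ x : Fin d → ℝ, x i * x j * ∏ t, gpdf (x t))
    = if i = j then (1:ℝ) else 0 := by
  have h : (fun x : Fin d → ℝ => x i * x j * ∏ t, gpdf (x t))
      = fun x => (∏ t, x t ^ (eind i t + eind j t)) * ∏ t, gpdf (x t) := by
    funext x; rw [← rep2]
  rw [h, intWval_mono]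
  by_cases hij : i = j
  · subst hij
    rw [if_pos rfl]
    refine Finset.prod_eq_one (fun t _ => ?_)
    unfold eind
    by_cases ht : t = i
    · simp [ht, gmom_two]
    · simp [ht, gmom_zero]
  · simp only [hij, if_false]
    refine Finset.prod_eq_zero (Finset.mem_univ i) ?_
    have hji : ¬ j = i := fun h => hij h.symm
    simp [eind, hji, hij, gmom_one]

lemma iM3 (i j k : Fin d) : Integrable (fun x : Fin d → ℝ => x i * x j * x k * ∏ t, gpdf (x t)) := by
  have h : (fun x : Fin d → ℝ => x i * x j * x k * ∏ t, gpdf (x t))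
      = fun x => (∏ t, x t ^ (eind i t + eind j t + eind k t)) * ∏ t, gpdf (x t) := by
    funext x; rw [← rep3]
  rw [h]; exact intW_mono _

lemma vM3 (i j k : Fin d) : (∫ x : Fin d → ℝ, x i * x j * x k * ∏ t, gpdf (x t)) = 0 := by
  have h : (fun x : Fin d → ℝ => x i * x j * x k * ∏ t, gpdf (x t))
      = fun x => (∏ t, x t ^ (eind i t + eind j t + eind k t)) * ∏ t, gpdf (x t) := by
    funext x; rw [← rep3]
  rw [h, intWval_mono]
  by_cases hij : i = j
  · subst hij
    by_cases hki : k = i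
    · subst hki
      exact Finset.prod_eq_zero (Finset.mem_univ k) (by simp [eind, gmom_three])
    · exact Finset.prod_eq_zero (Finset.mem_univ k) (by simp [eind, hki, gmom_one])
  · have hji : j ≠ i := fun h => hij h.symm
    by_cases hik : i = k
    · subst hik
      exact Finset.prod_eq_zero (Finset.mem_univ j) (by simp [eind, hji, gmom_one])
    · exact Finset.prod_eq_zero (Finset.mem_univ i) (by
        have hki : ¬ (i = k) := hik
        simp [eind, hji.symm.symm, gmom_one, hij, hik])

lemma iM4 (i j k l : Fin d) :
    Integrable (fun x : Fin d → ℝ => x i * x j * x k * x l * ∏ t, gpdf (x t)) := by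
  have h : (fun x : Fin d → ℝ => x i * x j * x k * x l * ∏ t, gpdf (x t))
      = fun x => (∏ t, x t ^ (eind i t + eind j t + eind k t + eind l t)) * ∏ t, gpdf (x t) := by
    funext x; rw [← rep4]
  rw [h]; exact intW_mono _

lemma vM4 (i j k l : Fin d) : (∫ x : Fin d → ℝ, x i * x j * x k * x l * ∏ t, gpdf (x t))
    = (if i = j then (1:ℝ) else 0) * (if k = l then (1:ℝ) else 0)
      + (if i = k then (1:ℝ) else 0) * (if j = l then (1:ℝ) else 0)
      + (if i = l then (1:ℝ) else 0) * (if j = k then (1:ℝ) else 0) := by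
  have h : (fun x : Fin d → ℝ => x i * x j * x k * x l * ∏ t, gpdf (x t))
      = fun x => (∏ t, x t ^ (eind i t + eind j t + eind k t + eind l t)) * ∏ t, gpdf (x t) := by
    funext x; rw [← rep4]
  rw [h, intWval_mono]
  by_cases hij : i = j
  · subst hij
    by_cases hkl : k = l
    · subst hkl
      by_cases hik : i = k
      · subst hik
        -- all four equal
        have h4 : ∀ t : Fin d, gmom (eind i t + eind i t + eind i t + eind i t)
            = if t = i then (3:ℝ) else 1 := fun t => by
          unfold eind; split_ifs with ht <;> simp [gmom_four, gmom_zero]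
        rw [Finset.prod_congr rfl (fun t _ => h4 t), Finset.prod_ite_eq']
        norm_num
      · -- pairs i,i and k,k with i ≠ k
        have hki : ¬ k = i := fun h => hik h.symm
        have h4 : ∀ t : Fin d, gmom (eind i t + eind i t + eind k t + eind k t) = 1 := fun t => by
          unfold eind
          by_cases hti : t = i
          · have : ¬ t = k := by rw [hti]; exact hik
            simp [hti, this, hik, gmom_two]
          · by_cases htk : t = k
            · simp [hti, htk, hki, gmom_two]
            · simp [hti, htk, gmom_zero]
        rw [Finset.prod_eq_one (fun t _ => h4 t)]
        simp [hik]
    · -- i = j, k ≠ l : zero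
      have hL : (∏ t, gmom (eind i t + eind i t + eind k t + eind l t)) = 0 := by
        by_cases hki : k = i
        · refine Finset.prod_eq_zero (Finset.mem_univ l) ?_
          have hlk : ¬ l = k := fun h => hkl h.symm
          have hli : ¬ l = i := by rw [← hki]; exact hlk
          simp [eind, hli, hlk, gmom_one]
        · refine Finset.prod_eq_zero (Finset.mem_univ k) ?_
          have hkl' : ¬ k = l := hkl
          simp [eind, hki, hkl', gmom_one, gmom_three]
      rw [hL]
      have h1 : ¬ (i = k ∧ i = l) := fun ⟨h1, h2⟩ => hkl (h1 ▸ h2 ▸ rfl)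
      by_cases hik : i = k
      · have hil : ¬ i = l := fun h => h1 ⟨hik, h⟩
        simp [hkl, hik, hil]
      · by_cases hil : i = l
        · have hlk : ¬ l = k := fun h => hkl h.symm
          simp [hkl, hik, hil, hlk]
        · simp [hkl, hik, hil]
  · -- i ≠ j
    by_cases hkl : k = l
    · subst hkl
      have hL : (∏ t, gmom (eind i t + eind j t + eind k t + eind k t)) = 0 := by
        refine Finset.prod_eq_zero (Finset.mem_univ j) ?_
        have hji : ¬ j = i := fun h => hij h.symm
        by_cases hjk : j = k
        · have hki : ¬ k = i := fun h => hij (by rw [hjk, h])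
          simp [eind, hji, hjk, hki, gmom_three]
        · simp [eind, hji, hjk, gmom_one]
      rw [hL]
      have : ¬ (i = k ∧ j = k) := fun ⟨h1, h2⟩ => hij (h1 ▸ h2 ▸ rfl)
      by_cases hik : i = k
      · have hjk : ¬ j = k := fun h => this ⟨hik, h⟩
        have hkj : ¬ k = j := fun h => hjk h.symm
        simp [hij, hik, hjk, hkj]
      · by_cases hjk : j = k
        · simp [hij, hik, hjk]
        · simp [hij, hik, hjk]
    · -- i ≠ j, k ≠ l
      by_cases hik : i = k
      · subst hik
        by_cases hjl : j = l
        · subst hjl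
          -- pattern i j i j with i ≠ j
          have hji : ¬ j = i := fun h => hij h.symm
          have h4 : ∀ t : Fin d, gmom (eind i t + eind j t + eind i t + eind j t) = 1 := fun t => by
            unfold eind
            by_cases hti : t = i
            · have : ¬ t = j := by rw [hti]; exact hij
              simp [hti, this, hij, gmom_two]
            · by_cases htj : t = j
              · simp [hti, htj, hji, gmom_two]
              · simp [hti, htj, gmom_zero]
          rw [Finset.prod_eq_one (fun t _ => h4 t)]
          simp [hij, hji]
        · -- zero at l
          have hL : (∏ t, gmom (eind i t + eind j t + eind i t + eind l t)) = 0 := by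
            refine Finset.prod_eq_zero (Finset.mem_univ l) ?_
            have hli : ¬ l = i := fun h => hkl h.symm
            have hlj : ¬ l = j := fun h => hjl h.symm
            simp [eind, hli, hlj, gmom_one]
          rw [hL]
          have hil : ¬ i = l := hkl
          simp [hij, hjl, hil]
      · by_cases hil : i = l
        · subst hil
          by_cases hjk : j = k
          · subst hjk
            have hji : ¬ j = i := fun h => hij h.symm
            have h4 : ∀ t : Fin d, gmom (eind i t + eind j t + eind j t + eind i t) = 1 := fun t => by
              unfold eind
              by_cases hti : t = i
              · have : ¬ t = j := by rw [hti]; exact hij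
                simp [hti, this, hij, gmom_two]
              · by_cases htj : t = j
                · simp [hti, htj, hji, gmom_two]
                · simp [hti, htj, gmom_zero]
            rw [Finset.prod_eq_one (fun t _ => h4 t)]
            simp [hij, hji, hik]
          · -- zero at k
            have hL : (∏ t, gmom (eind i t + eind j t + eind k t + eind i t)) = 0 := by
              refine Finset.prod_eq_zero (Finset.mem_univ k) ?_
              have hki : ¬ k = i := fun h => hik h.symm
              have hkj : ¬ k = j := fun h => hjk h.symm
              have hkl' : ¬ k = i := hki
              simp [eind, hki, hkj, gmom_one]
            rw [hL]
            have hjk' : ¬ j = k := hjk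
            simp [hij, hik, hjk']
        · -- zero at i
          have hL : (∏ t, gmom (eind i t + eind j t + eind k t + eind l t)) = 0 := by
            refine Finset.prod_eq_zero (Finset.mem_univ i) ?_
            have hij' : ¬ i = j := hij
            simp [eind, hij', hik, hil, gmom_one]
          rw [hL]
          simp [hij, hik, hil]

end Multi


section KeyPi
variable {d : ℕ}

lemma wick_sum (C : Fin d → Fin d → ℝ) :
    (∑ i, ∑ k, ∑ j, ∑ l, C i j * C k l *
      ((if i = j then (1:ℝ) else 0) * (if k = l then (1:ℝ) else 0)
        + (if i = k then (1:ℝ) else 0) * (if j = l then (1:ℝ) else 0)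
        + (if i = l then (1:ℝ) else 0) * (if j = k then (1:ℝ) else 0)))
    = (∑ i, C i i)^2 + (∑ i, ∑ j, (C i j)^2) + ∑ i, ∑ j, C i j * C j i := by
  have expand : ∀ i k : Fin d, (∑ j, ∑ l, C i j * C k l *
      ((if i = j then (1:ℝ) else 0) * (if k = l then (1:ℝ) else 0)
        + (if i = k then (1:ℝ) else 0) * (if j = l then (1:ℝ) else 0)
        + (if i = l then (1:ℝ) else 0) * (if j = k then (1:ℝ) else 0)))
      = C i i * C k k + (if i = k then (1:ℝ) else 0) * (∑ j, C i j * C k j)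
        + C i k * C k i := by
    intro i k
    have h1 : ∀ j l : Fin d, C i j * C k l *
        ((if i = j then (1:ℝ) else 0) * (if k = l then (1:ℝ) else 0)
          + (if i = k then (1:ℝ) else 0) * (if j = l then (1:ℝ) else 0)
          + (if i = l then (1:ℝ) else 0) * (if j = k then (1:ℝ) else 0))
        = (if i = j then (if k = l then C i j * C k l else 0) else 0)
          + (if i = k then (if j = l then C i j * C k l else 0) else 0)
          + (if i = l then (if j = k then C i j * C k l else 0) else 0) := by
      intro j l; split_ifs <;> ring
    simp only [h1, Finset.sum_add_distrib]
    congr 1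
    · congr 1
      · -- first term
        rw [Finset.sum_comm]
        simp [Finset.sum_ite_eq]
      · -- second term
        by_cases hik : i = k
        · simp [hik, Finset.sum_ite_eq]
        · simp [hik, Finset.sum_ite_eq]
    · -- third term
      simp [Finset.sum_ite_eq]
  simp only [expand, Finset.sum_add_distrib]
  have h2 : (∑ i, ∑ k, C i i * C k k) = (∑ i, C i i)^2 := by
    rw [pow_two, Finset.sum_mul_sum]
  have h3 : (∑ i : Fin d, ∑ k : Fin d, (if i = k then (1:ℝ) else 0) * (∑ j, C i j * C k j))
      = ∑ i, ∑ j, (C i j)^2 := by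
    refine Finset.sum_congr rfl fun i _ => ?_
    rw [show (∑ k : Fin d, (if i = k then (1:ℝ) else 0) * (∑ j, C i j * C k j))
        = ∑ k : Fin d, (if i = k then (∑ j, C i j * C k j) else 0) from
      Finset.sum_congr rfl fun k _ => by split_ifs <;> ring, Finset.sum_ite_eq]
    simp [pow_two]
  rw [h2, h3]

lemma key_pi (A : ℝ) (B : Fin d → ℝ) (C : Fin d → Fin d → ℝ) :
    (∫ x : Fin d → ℝ,
      (∏ t, gpdf (x t)) * (A + (∑ i, x i * B i) - ∑ i, x i * ∑ j, x j * C i j) ^ 2)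
    = A^2 + (∑ i, (B i)^2) - 2*A*(∑ i, C i i) + (∑ i, C i i)^2
      + (∑ i, ∑ j, (C i j)^2) + ∑ i, ∑ j, C i j * C j i := by
  have e1 : ∀ x : Fin d → ℝ, (∑ i, x i * B i) * (∏ t, gpdf (x t))
      = ∑ i, B i * (x i * ∏ t, gpdf (x t)) := fun x => by
    rw [Finset.sum_mul]; exact Finset.sum_congr rfl fun i _ => by ring
  have e2 : ∀ x : Fin d → ℝ, (∑ i, x i * ∑ j, x j * C i j) * (∏ t, gpdf (x t))
      = ∑ i, ∑ j, C i j * (x i * x j * ∏ t, gpdf (x t)) := fun x => by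
    rw [Finset.sum_mul]
    refine Finset.sum_congr rfl fun i _ => ?_
    rw [Finset.mul_sum, Finset.sum_mul]
    exact Finset.sum_congr rfl fun j _ => by ring
  have e3 : ∀ x : Fin d → ℝ, ((∑ i, x i * B i) * (∑ i, x i * B i)) * (∏ t, gpdf (x t))
      = ∑ i, ∑ j, (B i * B j) * (x i * x j * ∏ t, gpdf (x t)) := fun x => by
    rw [Finset.sum_mul_sum, Finset.sum_mul]
    refine Finset.sum_congr rfl fun i _ => ?_
    rw [Finset.sum_mul]
    exact Finset.sum_congr rfl fun j _ => by ring
  have e4 : ∀ x : Fin d → ℝ, ((∑ i, x i * B i) * (∑ i, x i * ∑ j, x j * C i j)) * (∏ t, gpdf (x t))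
      = ∑ i, ∑ j, ∑ k, (B i * C j k) * (x i * x j * x k * ∏ t, gpdf (x t)) := fun x => by
    rw [Finset.sum_mul_sum, Finset.sum_mul]
    refine Finset.sum_congr rfl fun i _ => ?_
    rw [Finset.sum_mul]
    refine Finset.sum_congr rfl fun j _ => ?_
    rw [show (x i * B i) * (x j * ∑ k, x k * C j k)
        = ∑ k, (x i * B i) * (x j * (x k * C j k)) from by rw [Finset.mul_sum, Finset.mul_sum],
      Finset.sum_mul]
    exact Finset.sum_congr rfl fun k _ => by ring
  have e5 : ∀ x : Fin d → ℝ,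
      ((∑ i, x i * ∑ j, x j * C i j) * (∑ i, x i * ∑ j, x j * C i j)) * (∏ t, gpdf (x t))
      = ∑ i, ∑ k, ∑ j, ∑ l, (C i j * C k l) * (x i * x j * x k * x l * ∏ t, gpdf (x t)) := fun x => by
    rw [Finset.sum_mul_sum, Finset.sum_mul]
    refine Finset.sum_congr rfl fun i _ => ?_
    rw [Finset.sum_mul]
    refine Finset.sum_congr rfl fun k _ => ?_
    rw [show (x i * ∑ j, x j * C i j) * (x k * ∑ l, x l * C k l)
        = ∑ j, ∑ l, (x i * (x j * C i j)) * (x k * (x l * C k l)) from by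
          rw [Finset.mul_sum, Finset.mul_sum, Finset.sum_mul_sum],
      Finset.sum_mul]
    refine Finset.sum_congr rfl fun j _ => ?_
    rw [Finset.sum_mul]
    exact Finset.sum_congr rfl fun l _ => by ring
  have hpt : (fun x : Fin d → ℝ =>
        (∏ t, gpdf (x t)) * (A + (∑ i, x i * B i) - ∑ i, x i * ∑ j, x j * C i j) ^ 2)
      = fun x =>
        A^2 * (∏ t, gpdf (x t))
        + ((2*A) * ∑ i, B i * (x i * ∏ t, gpdf (x t)))
        - ((2*A) * ∑ i, ∑ j, C i j * (x i * x j * ∏ t, gpdf (x t)))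
        + (∑ i, ∑ j, (B i * B j) * (x i * x j * ∏ t, gpdf (x t)))
        - (2 * ∑ i, ∑ j, ∑ k, (B i * C j k) * (x i * x j * x k * ∏ t, gpdf (x t)))
        + (∑ i, ∑ k, ∑ j, ∑ l, (C i j * C k l) * (x i * x j * x k * x l * ∏ t, gpdf (x t))) := by
    funext x
    rw [← e1 x, ← e2 x, ← e3 x, ← e4 x, ← e5 x]
    ring
  rw [hpt]
  -- integrability of the pieces
  have i0 : Integrable (fun x : Fin d → ℝ => A^2 * (∏ t, gpdf (x t))) := iW.const_mul _
  have i1 : Integrable (fun x : Fin d → ℝ => (2*A) * ∑ i, B i * (x i * ∏ t, gpdf (x t))) :=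
    (integrable_finset_sum _ (fun i _ => (iM1 i).const_mul (B i))).const_mul _
  have i2 : Integrable (fun x : Fin d → ℝ =>
      (2*A) * ∑ i, ∑ j, C i j * (x i * x j * ∏ t, gpdf (x t))) :=
    (integrable_finset_sum _ (fun i _ =>
      integrable_finset_sum _ (fun j _ => (iM2 i j).const_mul (C i j)))).const_mul _
  have i3 : Integrable (fun x : Fin d → ℝ =>
      ∑ i, ∑ j, (B i * B j) * (x i * x j * ∏ t, gpdf (x t))) :=
    integrable_finset_sum _ (fun i _ =>
      integrable_finset_sum _ (fun j _ => (iM2 i j).const_mul _))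
  have i4 : Integrable (fun x : Fin d → ℝ =>
      2 * ∑ i, ∑ j, ∑ k, (B i * C j k) * (x i * x j * x k * ∏ t, gpdf (x t))) :=
    (integrable_finset_sum _ (fun i _ => integrable_finset_sum _ (fun j _ =>
      integrable_finset_sum _ (fun k _ => (iM3 i j k).const_mul _)))).const_mul _
  have i5 : Integrable (fun x : Fin d → ℝ =>
      ∑ i, ∑ k, ∑ j, ∑ l, (C i j * C k l) * (x i * x j * x k * x l * ∏ t, gpdf (x t))) :=
    integrable_finset_sum _ (fun i _ => integrable_finset_sum _ (fun k _ =>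
      integrable_finset_sum _ (fun j _ =>
        integrable_finset_sum _ (fun l _ => (iM4 i j k l).const_mul _))))
  have I01 : Integrable (fun x : Fin d → ℝ =>
      A^2 * (∏ t, gpdf (x t))
      + ((2*A) * ∑ i, B i * (x i * ∏ t, gpdf (x t)))) := by exact i0.add i1
  have I02 : Integrable (fun x : Fin d → ℝ =>
      A^2 * (∏ t, gpdf (x t))
      + ((2*A) * ∑ i, B i * (x i * ∏ t, gpdf (x t)))
      - ((2*A) * ∑ i, ∑ j, C i j * (x i * x j * ∏ t, gpdf (x t)))) := by exact I01.sub i2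
  have I03 : Integrable (fun x : Fin d → ℝ =>
      A^2 * (∏ t, gpdf (x t))
      + ((2*A) * ∑ i, B i * (x i * ∏ t, gpdf (x t)))
      - ((2*A) * ∑ i, ∑ j, C i j * (x i * x j * ∏ t, gpdf (x t)))
      + (∑ i, ∑ j, (B i * B j) * (x i * x j * ∏ t, gpdf (x t)))) := by exact I02.add i3
  have I04 : Integrable (fun x : Fin d → ℝ =>
      A^2 * (∏ t, gpdf (x t))
      + ((2*A) * ∑ i, B i * (x i * ∏ t, gpdf (x t)))
      - ((2*A) * ∑ i, ∑ j, C i j * (x i * x j * ∏ t, gpdf (x t)))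
      + (∑ i, ∑ j, (B i * B j) * (x i * x j * ∏ t, gpdf (x t)))
      - (2 * ∑ i, ∑ j, ∑ k, (B i * C j k) * (x i * x j * x k * ∏ t, gpdf (x t)))) := by
    exact I03.sub i4
  rw [integral_add I04 i5, integral_sub I03 i4, integral_add I02 i3, integral_sub I01 i2,
    integral_add i0 i1]
  -- now compute each integral
  rw [integral_const_mul, vW]
  rw [integral_const_mul, integral_finset_sum _ (fun i _ => (iM1 i).const_mul (B i))]
  rw [integral_const_mul, integral_finset_sum _ (fun i _ =>
    integrable_finset_sum _ (fun j _ => (iM2 i j).const_mul (C i j)))]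
  rw [integral_finset_sum _ (fun i _ =>
    integrable_finset_sum _ (fun j _ => (iM2 i j).const_mul _))]
  rw [integral_const_mul, integral_finset_sum _ (fun i _ => integrable_finset_sum _ (fun j _ =>
    integrable_finset_sum _ (fun k _ => (iM3 i j k).const_mul _)))]
  rw [integral_finset_sum _ (fun i _ => integrable_finset_sum _ (fun k _ =>
    integrable_finset_sum _ (fun j _ =>
      integrable_finset_sum _ (fun l _ => (iM4 i j k l).const_mul _))))]
  have V1 : ∀ i : Fin d, (∫ a : Fin d → ℝ, B i * (a i * ∏ t, gpdf (a t))) = 0 := fun i => by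
    rw [integral_const_mul, vM1, mul_zero]
  have V2 : ∀ i : Fin d, (∫ a : Fin d → ℝ, ∑ j, C i j * (a i * a j * ∏ t, gpdf (a t))) = C i i := by
    intro i
    rw [integral_finset_sum _ (fun j _ => (iM2 i j).const_mul _)]
    have h : ∀ j : Fin d, (∫ a : Fin d → ℝ, C i j * (a i * a j * ∏ t, gpdf (a t)))
        = if i = j then C i j else 0 := fun j => by
      rw [integral_const_mul, vM2]; split_ifs <;> ring
    simp only [h, Finset.sum_ite_eq]
    simp
  have V3 : ∀ i : Fin d, (∫ a : Fin d → ℝ, ∑ j, B i * B j * (a i * a j * ∏ t, gpdf (a t)))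
      = B i ^ 2 := by
    intro i
    rw [integral_finset_sum _ (fun j _ => (iM2 i j).const_mul _)]
    have h : ∀ j : Fin d, (∫ a : Fin d → ℝ, B i * B j * (a i * a j * ∏ t, gpdf (a t)))
        = if i = j then B i * B j else 0 := fun j => by
      rw [integral_const_mul, vM2]; split_ifs <;> ring
    simp only [h, Finset.sum_ite_eq]
    simp [pow_two]
  have V4 : ∀ i : Fin d, (∫ a : Fin d → ℝ,
      ∑ j, ∑ k, B i * C j k * (a i * a j * a k * ∏ t, gpdf (a t))) = 0 := by
    intro i
    rw [integral_finset_sum _ (fun j _ =>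
      integrable_finset_sum _ (fun k _ => (iM3 i j k).const_mul _))]
    have h : ∀ j : Fin d, (∫ a : Fin d → ℝ, ∑ k, B i * C j k * (a i * a j * a k * ∏ t, gpdf (a t)))
        = 0 := fun j => by
      rw [integral_finset_sum _ (fun k _ => (iM3 i j k).const_mul _)]
      have h2 : ∀ k : Fin d, (∫ a : Fin d → ℝ, B i * C j k * (a i * a j * a k * ∏ t, gpdf (a t)))
          = 0 := fun k => by rw [integral_const_mul, vM3, mul_zero]
      simp [h2]
    simp [h]
  have V5 : ∀ i : Fin d, (∫ a : Fin d → ℝ,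
      ∑ k, ∑ j, ∑ l, C i j * C k l * (a i * a j * a k * a l * ∏ t, gpdf (a t)))
      = ∑ k, ∑ j, ∑ l, C i j * C k l *
        ((if i = j then (1:ℝ) else 0) * (if k = l then (1:ℝ) else 0)
          + (if i = k then (1:ℝ) else 0) * (if j = l then (1:ℝ) else 0)
          + (if i = l then (1:ℝ) else 0) * (if j = k then (1:ℝ) else 0)) := by
    intro i
    rw [integral_finset_sum _ (fun k _ => integrable_finset_sum _ (fun j _ =>
      integrable_finset_sum _ (fun l _ => (iM4 i j k l).const_mul _)))]
    refine Finset.sum_congr rfl fun k _ => ?_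
    rw [integral_finset_sum _ (fun j _ =>
      integrable_finset_sum _ (fun l _ => (iM4 i j k l).const_mul _))]
    refine Finset.sum_congr rfl fun j _ => ?_
    rw [integral_finset_sum _ (fun l _ => (iM4 i j k l).const_mul _)]
    refine Finset.sum_congr rfl fun l _ => ?_
    rw [integral_const_mul, vM4]
  simp only [V1, V2, V3, V4, V5, Finset.sum_const_zero, mul_zero]
  have hw : (∑ i : Fin d, ∑ k : Fin d, ∑ j : Fin d, ∑ l : Fin d, C i j * C k l *
      ((if i = j then (1:ℝ) else 0) * (if k = l then (1:ℝ) else 0)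
        + (if i = k then (1:ℝ) else 0) * (if j = l then (1:ℝ) else 0)
        + (if i = l then (1:ℝ) else 0) * (if j = k then (1:ℝ) else 0)))
      = (∑ i, C i i)^2 + (∑ i, ∑ j, (C i j)^2) + ∑ i, ∑ j, C i j * C j i := wick_sum C
  rw [hw]
  ring

end KeyPi


section Kappa
variable {d : ℕ}

lemma gauss_density_prod (x : Fin d → ℝ) :
    (2 * π) ^ (-(d : ℝ) / 2) *
      Real.exp (-‖(MeasurableEquiv.toLp 2 (Fin d → ℝ)) x‖ ^ 2 / 2)
    = ∏ t, gpdf (x t) := by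
  have hnorm : ‖(MeasurableEquiv.toLp 2 (Fin d → ℝ)) x‖ ^ 2 = ∑ t, (x t)^2 := by
    rw [EuclideanSpace.norm_eq, Real.sq_sqrt (Finset.sum_nonneg fun t _ => by positivity)]
    refine Finset.sum_congr rfl fun t _ => ?_
    rw [Real.norm_eq_abs, sq_abs]
    rfl
  rw [hnorm]
  unfold gpdf
  rw [Finset.prod_mul_distrib, Finset.prod_const, ← Real.exp_sum]
  have hc : ((Real.sqrt (2 * π))⁻¹) ^ (Finset.univ : Finset (Fin d)).card
      = (2 * π) ^ (-(d : ℝ) / 2) := by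
    rw [Finset.card_univ, Fintype.card_fin]
    rw [Real.sqrt_eq_rpow, ← Real.rpow_neg (by positivity)]
    rw [← Real.rpow_natCast ((2*π) ^ (-(1/2) : ℝ)) d, ← Real.rpow_mul (by positivity)]
    congr 1
    ring
  rw [hc]
  congr 1
  rw [← Finset.sum_div, Finset.sum_neg_distrib]

lemma key_kappa (κ : Measure (EuclideanSpace ℝ (Fin d)))
    (hκ : κ = volume.withDensity
      (fun v : EuclideanSpace ℝ (Fin d) => ENNReal.ofReal
        ((2 * Real.pi) ^ (-(d : ℝ) / 2) * Real.exp (-‖v‖ ^ 2 / 2))))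
    (A : ℝ) (B : Fin d → ℝ) (C : Fin d → Fin d → ℝ) :
    (∫ v : EuclideanSpace ℝ (Fin d),
        (A + (∑ i, v i * B i) - ∑ i, v i * ∑ j, v j * C i j) ^ 2 ∂κ)
    = A^2 + (∑ i, (B i)^2) - 2*A*(∑ i, C i i) + (∑ i, C i i)^2
      + (∑ i, ∑ j, (C i j)^2) + ∑ i, ∑ j, C i j * C j i := by
  subst hκ
  have hwnn : ∀ v : EuclideanSpace ℝ (Fin d),
      0 ≤ (2 * Real.pi) ^ (-(d : ℝ) / 2) * Real.exp (-‖v‖ ^ 2 / 2) := fun v => by positivity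
  have hwm : Measurable fun v : EuclideanSpace ℝ (Fin d) =>
      ((2 * Real.pi) ^ (-(d : ℝ) / 2) * Real.exp (-‖v‖ ^ 2 / 2)).toNNReal :=
    ((continuous_const.mul (Real.continuous_exp.comp (by continuity))).measurable).real_toNNReal
  have hden : (fun v : EuclideanSpace ℝ (Fin d) => ENNReal.ofReal
      ((2 * Real.pi) ^ (-(d : ℝ) / 2) * Real.exp (-‖v‖ ^ 2 / 2)))
      = fun v => (((2 * Real.pi) ^ (-(d : ℝ) / 2) * Real.exp (-‖v‖ ^ 2 / 2)).toNNReal : ENNReal) :=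
    rfl
  rw [hden, integral_withDensity_eq_integral_smul hwm]
  have hsmul : (fun v : EuclideanSpace ℝ (Fin d) =>
      ((2 * Real.pi) ^ (-(d : ℝ) / 2) * Real.exp (-‖v‖ ^ 2 / 2)).toNNReal •
        (A + (∑ i, v i * B i) - ∑ i, v i * ∑ j, v j * C i j) ^ 2)
      = fun v => ((2 * Real.pi) ^ (-(d : ℝ) / 2) * Real.exp (-‖v‖ ^ 2 / 2)) *
        (A + (∑ i, v i * B i) - ∑ i, v i * ∑ j, v j * C i j) ^ 2 := by
    funext v
    rw [NNReal.smul_def, Real.coe_toNNReal _ (hwnn v), smul_eq_mul]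
  rw [hsmul]
  rw [← MeasurePreserving.integral_comp'
    ((EuclideanSpace.volume_preserving_symm_measurableEquiv_toLp (Fin d)).symm)
    (fun v => ((2 * Real.pi) ^ (-(d : ℝ) / 2) * Real.exp (-‖v‖ ^ 2 / 2)) *
      (A + (∑ i, v i * B i) - ∑ i, v i * ∑ j, v j * C i j) ^ 2)]
  have hfin : (fun x : Fin d → ℝ =>
      ((2 * Real.pi) ^ (-(d : ℝ) / 2) *
          Real.exp (-‖(MeasurableEquiv.toLp 2 (Fin d → ℝ)) x‖ ^ 2 / 2)) *
        (A + (∑ i, ((MeasurableEquiv.toLp 2 (Fin d → ℝ)) x) i * B i)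
          - ∑ i, ((MeasurableEquiv.toLp 2 (Fin d → ℝ)) x) i *
              ∑ j, ((MeasurableEquiv.toLp 2 (Fin d → ℝ)) x) j * C i j) ^ 2)
      = fun x => (∏ t, gpdf (x t)) * (A + (∑ i, x i * B i) - ∑ i, x i * ∑ j, x j * C i j) ^ 2 := by
    funext x
    rw [gauss_density_prod x]
    rfl
  rw [MeasurableEquiv.symm_symm, hfin, key_pi]

end Kappa


section MainAux
variable {d : ℕ}

lemma diag_split (f : Fin d → Fin d → ℝ) :
    (∑ i, ∑ j, f i j) = (∑ i, f i i) + ∑ i, ∑ j, if i = j then 0 else f i j := by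
  rw [← Finset.sum_add_distrib]
  refine Finset.sum_congr rfl fun i _ => ?_
  have h : ∀ j : Fin d, f i j = (if i = j then f i j else 0) + (if i = j then 0 else f i j) :=
    fun j => by split_ifs <;> ring
  rw [Finset.sum_congr rfl (fun j _ => h j), Finset.sum_add_distrib, Finset.sum_ite_eq]
  simp

lemma alg_ineq (X : ℝ) (B0 Bt : Fin d → ℝ) (C : Fin d → Fin d → ℝ) :
    X^2 + (∑ i, (B0 i + Bt i)^2) + 2*X*(∑ i, C i i) + 3*(∑ i, (C i i)^2)
      + (∑ i, ∑ j, if i = j then 0 else (C i j)^2)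
      + (∑ i, ∑ j, if i = j then 0 else C i i * C j j)
      + (∑ i, ∑ j, if i = j then 0 else C i j * C j i)
    ≤ (X + ∑ i, C i i)^2
      + 2*((∑ i, (B0 i)^2) + (∑ i, (Bt i)^2) + ∑ i, ∑ j, (C i j)^2) := by
  have hB : (∑ i, (B0 i + Bt i)^2) ≤ (∑ i, (2*(B0 i)^2 + 2*(Bt i)^2)) :=
    Finset.sum_le_sum fun i _ => by nlinarith [sq_nonneg (B0 i - Bt i)]
  have hB' : (∑ i, (2*(B0 i)^2 + 2*(Bt i)^2))
      = 2*(∑ i, (B0 i)^2) + 2*(∑ i, (Bt i)^2) := by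
    rw [Finset.sum_add_distrib, ← Finset.mul_sum, ← Finset.mul_sum]
  have hC : (∑ i, ∑ j, if i = j then 0 else C i j * C j i)
      ≤ ∑ i, ∑ j, if i = j then 0 else ((C i j)^2/2 + (C j i)^2/2) := by
    refine Finset.sum_le_sum fun i _ => Finset.sum_le_sum fun j _ => ?_
    split_ifs
    · exact le_rfl
    · nlinarith [sq_nonneg (C i j - C j i)]
  have hC2 : (∑ i, ∑ j, if i = j then 0 else ((C i j)^2/2 + (C j i)^2/2))
      = ∑ i, ∑ j, if i = j then 0 else (C i j)^2 := by
    have hsplit : ∀ i j : Fin d, (if i = j then (0:ℝ) else ((C i j)^2/2 + (C j i)^2/2))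
        = (if i = j then 0 else (C i j)^2/2) + (if i = j then 0 else (C j i)^2/2) := fun i j => by
      split_ifs <;> ring
    simp only [hsplit, Finset.sum_add_distrib]
    have hswap : (∑ i, ∑ j, if i = j then (0:ℝ) else (C j i)^2/2)
        = ∑ i, ∑ j, if i = j then (0:ℝ) else (C i j)^2/2 := by
      rw [Finset.sum_comm]
      refine Finset.sum_congr rfl fun i _ => Finset.sum_congr rfl fun j _ => ?_
      by_cases h : i = j
      · simp [h]
      · have h' : ¬ j = i := fun hh => h hh.symm
        simp [h, h']
    rw [hswap, ← Finset.sum_add_distrib]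
    refine Finset.sum_congr rfl fun i _ => ?_
    rw [← Finset.sum_add_distrib]
    refine Finset.sum_congr rfl fun j _ => ?_
    split_ifs <;> ring
  have hOsq : (∑ i, ∑ j, if i = j then 0 else (C i j)^2) ≤ ∑ i, ∑ j, (C i j)^2 := by
    refine Finset.sum_le_sum fun i _ => Finset.sum_le_sum fun j _ => ?_
    split_ifs
    · positivity
    · exact le_rfl
  have e2 : (∑ i, C i i)^2
      = (∑ i, (C i i)^2) + ∑ i, ∑ j, if i = j then 0 else C i i * C j j := by
    rw [pow_two, Finset.sum_mul_sum, diag_split (fun i j => C i i * C j j)]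
    congr 1
    exact Finset.sum_congr rfl fun i _ => (pow_two (C i i)).symm
  have e3 : (∑ i, ∑ j, (C i j)^2)
      = (∑ i, (C i i)^2) + ∑ i, ∑ j, if i = j then 0 else (C i j)^2 :=
    diag_split (fun i j => (C i j)^2)
  have hD : 0 ≤ ∑ i, (C i i)^2 := Finset.sum_nonneg fun i _ => sq_nonneg _
  nlinarith [hB, hB', hC, hC2, hOsq, e2, e3, hD]

end MainAux

/-- Squared `L²(dt⊗ρ∞)`-norm computation for the hypocoercive test function `G`:
integrating out the Gaussian velocity variable gives an explicit expression in terms of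
`φ₀, φ` and their derivatives, and consequently
`∫ G² ≤ ∫ (∂_tφ₀ - φ·∇U + ∇_x·φ)² + 2 Σ_{(i,j)≠(0,0)} ‖∂_{x_i}φ_j‖²` (`∂_{x_0} = ∂_t`). -/
theorem testG_norm_computation (d : ℕ) (T : ℝ) (hT : 0 < T)
    (U : EuclideanSpace ℝ (Fin d) → ℝ) (hU : ContDiff ℝ 2 U)
    (hUint : Integrable (fun x => Real.exp (-U x)))
    (μ κ : Measure (EuclideanSpace ℝ (Fin d)))
    (hμ : μ = volume.withDensity
      (fun x => ENNReal.ofReal (Real.exp (-U x) / ∫ y, Real.exp (-U y))))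
    (hκ : κ = volume.withDensity
      (fun v : EuclideanSpace ℝ (Fin d) => ENNReal.ofReal
        ((2 * Real.pi) ^ (-(d : ℝ) / 2) * Real.exp (-‖v‖ ^ 2 / 2))))
    (ν : Measure (ℝ × EuclideanSpace ℝ (Fin d)))
    (hν : ν = (volume.restrict (Set.Ioo 0 T)).prod μ)
    (η : Measure ((ℝ × EuclideanSpace ℝ (Fin d)) × EuclideanSpace ℝ (Fin d)))
    (hη : η = ((volume.restrict (Set.Ioo 0 T)).prod μ).prod κ)
    (φ₀ : ℝ × EuclideanSpace ℝ (Fin d) → ℝ) (hφ₀ : ContDiff ℝ 1 φ₀)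
    (φ : Fin d → ℝ × EuclideanSpace ℝ (Fin d) → ℝ) (hφ : ∀ i, ContDiff ℝ 1 (φ i))
    (hintG : Integrable (fun q => (testG U φ₀ φ q) ^ 2) η)
    (hintA : Integrable (fun p =>
      (Dt φ₀ p - ∑ i, φ i p * gradient U p.2 i + ∑ i, Dx i (φ i) p) ^ 2) ν)
    (hint0 : ∀ i, Integrable (fun p => (Dx i φ₀ p) ^ 2) ν)
    (hintt : ∀ i, Integrable (fun p => (Dt (φ i) p) ^ 2) ν)
    (hintx : ∀ i j, Integrable (fun p => (Dx i (φ j) p) ^ 2) ν) :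
    (∫ q, (testG U φ₀ φ q) ^ 2 ∂η =
      ∫ p, ((Dt φ₀ p - ∑ i, φ i p * gradient U p.2 i) ^ 2 +
        (∑ i, (Dx i φ₀ p + Dt (φ i) p) ^ 2) +
        2 * (Dt φ₀ p - ∑ i, φ i p * gradient U p.2 i) * (∑ i, Dx i (φ i) p) +
        3 * (∑ i, (Dx i (φ i) p) ^ 2) +
        (∑ i, ∑ j, if i = j then 0 else (Dx i (φ j) p) ^ 2) +
        (∑ i, ∑ j, if i = j then 0 else Dx i (φ i) p * Dx j (φ j) p) +
        (∑ i, ∑ j, if i = j then 0 else Dx i (φ j) p * Dx j (φ i) p)) ∂ν) ∧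
    (∫ q, (testG U φ₀ φ q) ^ 2 ∂η ≤
      (∫ p, (Dt φ₀ p - ∑ i, φ i p * gradient U p.2 i + ∑ i, Dx i (φ i) p) ^ 2 ∂ν) +
        2 * ((∑ i, ∫ p, (Dx i φ₀ p) ^ 2 ∂ν) + (∑ i, ∫ p, (Dt (φ i) p) ^ 2 ∂ν) +
          ∑ i, ∑ j, ∫ p, (Dx i (φ j) p) ^ 2 ∂ν)) := by
  haveI hsμ : SFinite μ := by rw [hμ]; infer_instance
  haveI hsκ : SFinite κ := by rw [hκ]; infer_instance
  haveI hsν : SFinite ν := by rw [hν]; infer_instance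
  have hη' : η = ν.prod κ := by rw [hη, hν]
  have hintG' : Integrable (fun q => (testG U φ₀ φ q) ^ 2) (ν.prod κ) := hη' ▸ hintG
  have hform : ∀ (p : ℝ × EuclideanSpace ℝ (Fin d)) (v : EuclideanSpace ℝ (Fin d)),
      testG U φ₀ φ (p, v)
      = (-(Dt φ₀ p) + ∑ i, φ i p * gradient U p.2 i)
        + (∑ i, v i * (Dx i φ₀ p + Dt (φ i) p))
        - ∑ i, v i * ∑ j, v j * Dx i (φ j) p := by
    intro p v
    simp only [testG]
    have h : (∑ i, v i * (Dx i φ₀ p + Dt (φ i) p))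
        = (∑ i, v i * Dx i φ₀ p) + ∑ i, v i * Dt (φ i) p := by
      rw [← Finset.sum_add_distrib]
      exact Finset.sum_congr rfl fun i _ => by ring
    rw [h]
    ring
  have hinner : ∀ p : ℝ × EuclideanSpace ℝ (Fin d),
      (∫ v, (testG U φ₀ φ (p, v)) ^ 2 ∂κ)
      = (Dt φ₀ p - ∑ i, φ i p * gradient U p.2 i) ^ 2 +
        (∑ i, (Dx i φ₀ p + Dt (φ i) p) ^ 2) +
        2 * (Dt φ₀ p - ∑ i, φ i p * gradient U p.2 i) * (∑ i, Dx i (φ i) p) +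
        3 * (∑ i, (Dx i (φ i) p) ^ 2) +
        (∑ i, ∑ j, if i = j then 0 else (Dx i (φ j) p) ^ 2) +
        (∑ i, ∑ j, if i = j then 0 else Dx i (φ i) p * Dx j (φ j) p) +
        (∑ i, ∑ j, if i = j then 0 else Dx i (φ j) p * Dx j (φ i) p) := by
    intro p
    have hfun : (fun v : EuclideanSpace ℝ (Fin d) => (testG U φ₀ φ (p, v)) ^ 2)
        = fun v => ((-(Dt φ₀ p) + ∑ i, φ i p * gradient U p.2 i)
          + (∑ i, v i * (Dx i φ₀ p + Dt (φ i) p))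
          - ∑ i, v i * ∑ j, v j * Dx i (φ j) p) ^ 2 := funext fun v => by rw [hform p v]
    rw [hfun, key_kappa κ hκ _ _ _]
    have e2 : (∑ i, Dx i (φ i) p)^2
        = (∑ i, (Dx i (φ i) p)^2)
          + ∑ i, ∑ j, if i = j then 0 else Dx i (φ i) p * Dx j (φ j) p := by
      rw [pow_two, Finset.sum_mul_sum, diag_split (fun i j => Dx i (φ i) p * Dx j (φ j) p)]
      congr 1
      exact Finset.sum_congr rfl fun i _ => (pow_two (Dx i (φ i) p)).symm
    have e3 : (∑ i, ∑ j, (Dx i (φ j) p)^2)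
        = (∑ i, (Dx i (φ i) p)^2)
          + ∑ i, ∑ j, if i = j then 0 else (Dx i (φ j) p)^2 :=
      diag_split (fun i j => (Dx i (φ j) p)^2)
    have e4 : (∑ i, ∑ j, Dx i (φ j) p * Dx j (φ i) p)
        = (∑ i, (Dx i (φ i) p)^2)
          + ∑ i, ∑ j, if i = j then 0 else Dx i (φ j) p * Dx j (φ i) p := by
      rw [diag_split (fun i j => Dx i (φ j) p * Dx j (φ i) p)]
      congr 1
      exact Finset.sum_congr rfl fun i _ => (pow_two (Dx i (φ i) p)).symm
    linear_combination e2 + e3 + e4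
  have hmain : (∫ q, (testG U φ₀ φ q) ^ 2 ∂η)
      = ∫ p, (∫ v, (testG U φ₀ φ (p, v)) ^ 2 ∂κ) ∂ν := by
    rw [hη']
    exact integral_prod _ hintG'
  constructor
  · rw [hmain]
    exact integral_congr_ae (Filter.Eventually.of_forall fun p => hinner p)
  · rw [hmain]
    have hF1 : Integrable (fun p => ∫ v, (testG U φ₀ φ (p, v)) ^ 2 ∂κ) ν :=
      hintG'.integral_prod_left
    have hB2 : Integrable (fun p : ℝ × EuclideanSpace ℝ (Fin d) =>
        2 * ((∑ i, (Dx i φ₀ p)^2) + (∑ i, (Dt (φ i) p)^2) + ∑ i, ∑ j, (Dx i (φ j) p)^2)) ν := by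
      refine Integrable.const_mul ?_ 2
      exact ((integrable_finset_sum _ fun i _ => hint0 i).add
        (integrable_finset_sum _ fun i _ => hintt i)).add
        (integrable_finset_sum _ fun i _ => integrable_finset_sum _ fun j _ => hintx i j)
    have hBound : Integrable (fun p : ℝ × EuclideanSpace ℝ (Fin d) =>
        (Dt φ₀ p - ∑ i, φ i p * gradient U p.2 i + ∑ i, Dx i (φ i) p) ^ 2
        + 2 * ((∑ i, (Dx i φ₀ p)^2) + (∑ i, (Dt (φ i) p)^2) + ∑ i, ∑ j, (Dx i (φ j) p)^2)) ν :=
      hintA.add hB2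
    have hle : ∀ p : ℝ × EuclideanSpace ℝ (Fin d),
        (∫ v, (testG U φ₀ φ (p, v)) ^ 2 ∂κ)
        ≤ (Dt φ₀ p - ∑ i, φ i p * gradient U p.2 i + ∑ i, Dx i (φ i) p) ^ 2
          + 2 * ((∑ i, (Dx i φ₀ p)^2) + (∑ i, (Dt (φ i) p)^2) + ∑ i, ∑ j, (Dx i (φ j) p)^2) := by
      intro p
      rw [hinner p]
      exact alg_ineq (Dt φ₀ p - ∑ i, φ i p * gradient U p.2 i)
        (fun i => Dx i φ₀ p) (fun i => Dt (φ i) p) (fun i j => Dx i (φ j) p)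
    refine le_trans (integral_mono hF1 hBound hle) ?_
    rw [integral_add hintA hB2, integral_const_mul]
    have hsplit : (∫ p, ((∑ i, (Dx i φ₀ p)^2) + (∑ i, (Dt (φ i) p)^2)
        + ∑ i, ∑ j, (Dx i (φ j) p)^2) ∂ν)
        = (∑ i, ∫ p, (Dx i φ₀ p) ^ 2 ∂ν) + (∑ i, ∫ p, (Dt (φ i) p) ^ 2 ∂ν) +
          ∑ i, ∑ j, ∫ p, (Dx i (φ j) p) ^ 2 ∂ν := by
      have hIa : Integrable (fun p : ℝ × EuclideanSpace ℝ (Fin d) =>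
          (∑ i, (Dx i φ₀ p)^2) + (∑ i, (Dt (φ i) p)^2)) ν := by
        exact (integrable_finset_sum _ fun i _ => hint0 i).add
          (integrable_finset_sum _ fun i _ => hintt i)
      rw [integral_add hIa
        (integrable_finset_sum _ fun i _ => integrable_finset_sum _ fun j _ => hintx i j),
        integral_add (integrable_finset_sum _ fun i _ => hint0 i)
          (integrable_finset_sum _ fun i _ => hintt i),
        integral_finset_sum _ (fun i _ => hint0 i),
        integral_finset_sum _ (fun i _ => hintt i),
        integral_finset_sum _ (fun i _ => integrable_finset_sum _ fun j _ => hintx i j)]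
      congr 1
      exact Finset.sum_congr rfl fun i _ => integral_finset_sum _ (fun j _ => hintx i j)
    rw [hsplit]
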